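/- Let d ≥ 2, let u, v ∈ ℝ^d be nonzero vectors with angle φ = arccos(u·v / (‖u‖₂‖v‖₂)) ∈ [0, π], and let x be distributed uniformly on the unit sphere in ℝ^d. Then Pr[sign(u · x) ≠ sign(v · x)] = φ/π. -/

import Mathlib

open MeasureTheory RealInnerProductSpace

/-- A `{±1}`-valued sign function. -/
noncomputable def sgn (t : ℝ) : ℝ := if 0 < t then 1 else -1

lemma sgn_ne_iff {p q : ℝ} : sgn p ≠ sgn q ↔ ¬ (0 < p ↔ 0 < q) := by
  unfold sgn
  by_cases hp : 0 < p <;> by_cases hq : 0 < q <;> simp [hp, hq] <;> norm_num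

lemma sgn_cases (t : ℝ) : sgn t = 1 ∨ sgn t = -1 := by
  unfold sgn; split_ifs <;> simp

lemma sgn_ne_mul_neg {p q : ℝ} (h : sgn p ≠ sgn q) (hp : p ≠ 0) (hq : q ≠ 0) : p * q < 0 := by
  rw [sgn_ne_iff] at h
  rcases hp.lt_or_gt with h1 | h1 <;> rcases hq.lt_or_gt with h2 | h2
  · exact absurd (iff_of_false (by linarith) (by linarith)) h
  · nlinarith
  · nlinarith
  · exact absurd (iff_of_true h1 h2) h

lemma sgn_neg_ne_iff {t : ℝ} : sgn t ≠ sgn (-t) ↔ t ≠ 0 := by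
  rw [sgn_ne_iff]
  rcases lt_trichotomy t 0 with h | h | h
  · constructor
    · intro _; exact ne_of_lt h
    · intro _ hc; rcases hc with ⟨h1, h2⟩; linarith [h2 (by linarith : 0 < -t)]
  · simp [h]
  · constructor
    · intro _; exact ne_of_gt h
    · intro _ hc; rcases hc with ⟨h1, h2⟩; linarith [h1 h]

section Helpers

variable {d : ℕ}

local notation "E" => EuclideanSpace ℝ (Fin d)

/-- Extend an orthonormal family indexed by `Fin m` to an orthonormal basis. -/
lemma ext_onb (h : m ≤ d) (w : Fin m → E) (hw : Orthonormal ℝ w) :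
    ∃ b : OrthonormalBasis (Fin d) ℝ E, ∀ i : Fin m, b (Fin.castLE h i) = w i := by
  classical
  set v : Fin d → E := fun i => if hi : i.val < m then w ⟨i.val, hi⟩ else 0 with hv
  set s : Set (Fin d) := {i | i.val < m} with hs
  have hrestrict : Orthonormal ℝ (s.restrict v) := by
    rw [orthonormal_iff_ite]
    rintro ⟨i, hi⟩ ⟨j, hj⟩
    have hi' : i.val < m := hi
    have hj' : j.val < m := hj
    have := (orthonormal_iff_ite.mp hw) ⟨i.val, hi'⟩ ⟨j.val, hj'⟩
    show ⟪v i, v j⟫ = (if (⟨i, hi⟩ : s) = ⟨j, hj⟩ then (1:ℝ) else 0)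
    simp only [hv, dif_pos hi', dif_pos hj']
    rw [this]
    simp [Fin.ext_iff, Subtype.ext_iff]
  obtain ⟨b, hb⟩ := hrestrict.exists_orthonormalBasis_extension_of_card_eq
    (by simp [finrank_euclideanSpace_fin])
  refine ⟨b, fun i => ?_⟩
  have hi : (Fin.castLE h i) ∈ s := by simpa [hs] using i.isLt
  rw [hb _ hi]
  simp [hv, i.isLt]

lemma rot_onb (b : OrthonormalBasis (Fin d) ℝ E) (i₀ i₁ : Fin d) (hne : i₀ ≠ i₁) (θ : ℝ) :
    ∃ b' : OrthonormalBasis (Fin d) ℝ E,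
      b' i₀ = Real.cos θ • b i₀ + Real.sin θ • b i₁ ∧
      b' i₁ = -Real.sin θ • b i₀ + Real.cos θ • b i₁ ∧
      ∀ i, i ≠ i₀ → i ≠ i₁ → b' i = b i := by
  classical
  set r : Fin d → E := fun i => if i = i₀ then Real.cos θ • b i₀ + Real.sin θ • b i₁
    else if i = i₁ then -Real.sin θ • b i₀ + Real.cos θ • b i₁ else b i with hrdef
  have key : ∀ k l : Fin d, ⟪b k, b l⟫ = if k = l then (1:ℝ) else 0 :=
    orthonormal_iff_ite.mp b.orthonormal
  have expand : ∀ (x y z w : ℝ), ⟪x • b i₀ + y • b i₁, z • b i₀ + w • b i₁⟫ = x*z + y*w := by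
    intro x y z w
    simp only [inner_add_left, inner_add_right, real_inner_smul_left, real_inner_smul_right, key]
    simp only [if_pos rfl, hne, hne.symm, if_true, if_false, ite_true, ite_false]
    ring
  have expandL : ∀ (k : Fin d) (z w : ℝ), k ≠ i₀ → k ≠ i₁ → ⟪b k, z • b i₀ + w • b i₁⟫ = 0 := by
    intro k z w hk0 hk1
    rw [inner_add_right, real_inner_smul_right, real_inner_smul_right, key, key,
      if_neg hk0, if_neg hk1]
    ring
  have expandR : ∀ (k : Fin d) (z w : ℝ), k ≠ i₀ → k ≠ i₁ → ⟪z • b i₀ + w • b i₁, b k⟫ = 0 := by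
    intro k z w hk0 hk1
    rw [inner_add_left, real_inner_smul_left, real_inner_smul_left, key, key,
      if_neg (Ne.symm hk0), if_neg (Ne.symm hk1)]
    ring
  have sc : Real.sin θ ^ 2 + Real.cos θ ^ 2 = 1 := Real.sin_sq_add_cos_sq θ
  have ri₀ : r i₀ = Real.cos θ • b i₀ + Real.sin θ • b i₁ := by simp [hrdef]
  have ri₁ : r i₁ = -Real.sin θ • b i₀ + Real.cos θ • b i₁ := by simp [hrdef, hne.symm]
  have rother : ∀ i, i ≠ i₀ → i ≠ i₁ → r i = b i := by
    intro i h0 h1; simp [hrdef, h0, h1]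
  have hr : Orthonormal ℝ r := by
    rw [orthonormal_iff_ite]
    intro i j
    by_cases h1 : i = i₀
    · rw [h1]
      by_cases h3 : j = i₀
      · rw [h3, ri₀, expand, if_pos rfl]; nlinarith [sc]
      · by_cases h4 : j = i₁
        · rw [h4, ri₀, ri₁, expand, if_neg hne]; ring
        · rw [ri₀, rother j h3 h4, expandR j _ _ h3 h4,
            if_neg (fun h => h3 h.symm)]
    · by_cases h2 : i = i₁
      · rw [h2]
        by_cases h3 : j = i₀
        · rw [h3, ri₀, ri₁, expand, if_neg hne.symm]; ring
        · by_cases h4 : j = i₁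
          · rw [h4, ri₁, expand, if_pos rfl]; nlinarith [sc]
          · rw [ri₁, rother j h3 h4, expandR j _ _ h3 h4,
              if_neg (fun h => h4 h.symm)]
      · rw [rother i h1 h2]
        by_cases h3 : j = i₀
        · rw [h3, ri₀, expandL i _ _ h1 h2, if_neg h1]
        · by_cases h4 : j = i₁
          · rw [h4, ri₁, expandL i _ _ h1 h2, if_neg h2]
          · rw [rother j h3 h4]; exact key i j
  have hv : Orthonormal ℝ ((Set.univ : Set (Fin d)).restrict r) :=
    hr.comp _ Subtype.val_injective
  obtain ⟨b', hb'⟩ := hv.exists_orthonormalBasis_extension_of_card_eq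
    (by simp [finrank_euclideanSpace_fin])
  have hb'' : ∀ i, b' i = r i := fun i => hb' i (Set.mem_univ i)
  refine ⟨b', ?_, ?_, ?_⟩
  · rw [hb'']; simp [hrdef]
  · rw [hb'']; simp [hrdef, hne.symm]
  · intro i hi0 hi1; rw [hb'']; simp [hrdef, hi0, hi1]
  
lemma inner_zero_meas (w : E) : MeasurableSet {x : EuclideanSpace ℝ (Fin d) | ⟪w, x⟫ = 0} :=
  (isClosed_eq (continuous_const.inner continuous_id) continuous_const).measurableSet

lemma map_measure {μ : Measure (EuclideanSpace ℝ (Fin d))}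
    (hrot : ∀ T : EuclideanSpace ℝ (Fin d) ≃ₗᵢ[ℝ] EuclideanSpace ℝ (Fin d), μ.map T = μ)
    (T : EuclideanSpace ℝ (Fin d) ≃ₗᵢ[ℝ] EuclideanSpace ℝ (Fin d))
    {s : Set (EuclideanSpace ℝ (Fin d))} (hs : MeasurableSet s) : μ (T ⁻¹' s) = μ s := by
  conv_rhs => rw [← hrot T]
  rw [Measure.map_apply T.continuous.measurable hs]

lemma basis_map (b c : OrthonormalBasis (Fin d) ℝ E) (i : Fin d) :
    (b.repr.trans c.repr.symm) (b i) = c i := by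
  simp only [LinearIsometryEquiv.trans_apply, OrthonormalBasis.repr_self,
    OrthonormalBasis.repr_symm_single]

lemma ortho_null {μ : Measure (EuclideanSpace ℝ (Fin d))} [IsProbabilityMeasure μ]
    (hsupp : μ {x | ‖x‖ = 1}ᶜ = 0)
    (hrot : ∀ T : EuclideanSpace ℝ (Fin d) ≃ₗᵢ[ℝ] EuclideanSpace ℝ (Fin d), μ.map T = μ) :
    ∀ n m, m + n = d → 1 ≤ m → ∀ w : Fin m → EuclideanSpace ℝ (Fin d), Orthonormal ℝ w →
      μ {x | ∀ i, ⟪w i, x⟫ = 0} = 0 := by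
  intro n
  induction n with
  | zero =>
    intro m hmd hm w hw
    refine measure_mono_null ?_ hsupp
    intro x hx
    simp only [Set.mem_setOf_eq] at hx
    obtain ⟨b, hb⟩ := ext_onb (le_of_eq hmd) w hw
    have hx0 : x = 0 := by
      have hr : b.repr x = 0 := by
        ext i
        have hi : i.val < m := by omega
        have : b (Fin.castLE (le_of_eq hmd) ⟨i.val, hi⟩) = w ⟨i.val, hi⟩ := hb _
        have hcast : Fin.castLE (le_of_eq hmd) ⟨i.val, hi⟩ = i := by
          apply Fin.ext; rfl
        rw [hcast] at this
        rw [OrthonormalBasis.repr_apply_apply, this]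
        exact hx _
      simpa using b.repr.map_eq_zero_iff.mp hr
    simp [hx0]
  | succ n ih =>
    intro m hmd hm w hw
    have hmd' : m < d := by omega
    set S : Set (EuclideanSpace ℝ (Fin d)) := {x | ∀ i, ⟪w i, x⟫ = 0} with hSdef
    have hSmeas : MeasurableSet S := by
      have : S = ⋂ i, {x | ⟪w i, x⟫ = 0} := by ext x; simp [hSdef, Set.mem_iInter]
      rw [this]
      exact MeasurableSet.iInter fun i => inner_zero_meas _
    obtain ⟨b, hb⟩ := ext_onb hmd'.le w hw
    set i₀ : Fin d := ⟨0, by omega⟩ with hi₀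
    set i₁ : Fin d := ⟨m, hmd'⟩ with hi₁
    have hne : i₀ ≠ i₁ := by simp only [hi₀, hi₁, ne_eq, Fin.mk.injEq]; omega
    set c : EuclideanSpace ℝ (Fin d) := b i₁ with hc
    have hw0 : w ⟨0, hm⟩ = b i₀ := by
      rw [← hb ⟨0, hm⟩]; congr 1
    -- the smaller zero set
    set Z : Set (EuclideanSpace ℝ (Fin d)) :=
      {x | (∀ i, ⟪w i, x⟫ = 0) ∧ ⟪c, x⟫ = 0} with hZdef
    have hZ : μ Z = 0 := by
      classical
      set w' : Fin (m+1) → EuclideanSpace ℝ (Fin d) :=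
        fun i => if h : i.val < m then w ⟨i.val, h⟩ else c with hw'def
      have hg : ∀ i : Fin (m+1), w' i = b ⟨i.val, by omega⟩ := by
        intro i
        by_cases h : i.val < m
        · rw [hw'def]; simp only [dif_pos h]
          rw [← hb ⟨i.val, h⟩]; congr 1
        · have : i.val = m := by omega
          rw [hw'def]; simp only [dif_neg h]
          rw [hc]; congr 1; apply Fin.ext; simp [this, hi₁]
      have hw' : Orthonormal ℝ w' := by
        have : w' = b ∘ (fun i : Fin (m+1) => (⟨i.val, by omega⟩ : Fin d)) := funext hg
        rw [this]
        exact b.orthonormal.comp _ (fun i j hij => by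
          apply Fin.ext
          simpa [Fin.ext_iff] using hij)
      have := ih (m+1) (by omega) (by omega) w' hw'
      convert this using 2
      ext x
      simp only [hZdef, Set.mem_setOf_eq]
      constructor
      · rintro ⟨h1, h2⟩ i
        by_cases h : i.val < m
        · rw [hw'def]; simp only [dif_pos h]; exact h1 _
        · rw [hw'def]; simp only [dif_neg h]; exact h2
      · intro h
        constructor
        · intro i
          have := h ⟨i.val, by omega⟩
          rw [hw'def] at this
          simpa [i.isLt] using this
        · have := h ⟨m, by omega⟩
          rw [hw'def] at this
          simpa using this
    have hZmeas : MeasurableSet Z := by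
      have : Z = S ∩ {x | ⟪c, x⟫ = 0} := by ext x; simp [hZdef, hSdef]
      rw [this]
      exact hSmeas.inter (inner_zero_meas _)
    -- rotated copies of S
    have main : ∀ θ : ℝ, ∃ A : Set (EuclideanSpace ℝ (Fin d)),
        MeasurableSet A ∧ μ A = μ S ∧
        A = {x | ⟪Real.cos θ • w ⟨0, hm⟩ + Real.sin θ • c, x⟫ = 0 ∧
               ∀ i : Fin m, 0 < i.val → ⟪w i, x⟫ = 0} := by
      intro θ
      obtain ⟨b', h0', h1', ho'⟩ := rot_onb b i₀ i₁ hne θ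
      set T := b.repr.trans b'.repr.symm with hT
      have hTb : ∀ i : Fin d, T (b i) = b' i := fun i => basis_map b b' i
      refine ⟨T.symm ⁻¹' S, hSmeas.preimage T.symm.continuous.measurable, ?_, ?_⟩
      · exact map_measure hrot T.symm hSmeas
      · ext x
        simp only [Set.mem_preimage, hSdef, Set.mem_setOf_eq]
        have key : ∀ a : EuclideanSpace ℝ (Fin d), ⟪a, T.symm x⟫ = ⟪T a, x⟫ := by
          intro a
          rw [← T.inner_map_map a (T.symm x), T.apply_symm_apply]
        constructor
        · intro h
          constructor
          · have := h ⟨0, hm⟩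
            rw [key, hw0] at this
            have hTw : T (b i₀) = Real.cos θ • b i₀ + Real.sin θ • b i₁ := by
              rw [hTb]; exact h0'
            rw [hTw] at this
            rw [hw0]
            exact this
          · intro i hi
            have := h i
            rw [key] at this
            have hcast : w i = b ⟨i.val, by omega⟩ := by rw [← hb i]; congr 1
            rw [hcast, hTb, ho' _ (by simp [hi₀, Fin.ext_iff]; omega)
              (by simp [hi₁, Fin.ext_iff]; omega)] at this
            rw [hcast]
            exact this
        · rintro ⟨h1, h2⟩ i
          rw [key]
          by_cases h : 0 < i.val
          · have hcast : w i = b ⟨i.val, by omega⟩ := by rw [← hb i]; congr 1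
            rw [hcast, hTb, ho' _ (by simp [hi₀, Fin.ext_iff]; omega)
              (by simp [hi₁, Fin.ext_iff]; omega), ← hcast]
            exact h2 i h
          · have hi0 : i = ⟨0, hm⟩ := by refine Fin.ext ?_; show (i:ℕ) = 0; omega
            rw [hi0, hw0, hTb, h0', ← hw0]
            exact h1
    -- choose countably many angles
    set θf : ℕ → ℝ := fun k => Real.pi / (k + 3) with hθf
    have hθmem : ∀ k : ℕ, 0 < θf k ∧ θf k < Real.pi / 2 := by
      intro k
      have h0 : (0:ℝ) ≤ (k:ℝ) := Nat.cast_nonneg k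
      have h3 : (3:ℝ) ≤ (k:ℝ) + 3 := by linarith
      constructor
      · apply div_pos Real.pi_pos; linarith
      · rw [div_lt_div_iff₀ (by linarith) (by norm_num)]
        nlinarith [Real.pi_pos]
    have hθinj : Function.Injective θf := by
      intro a b hab
      have h1 : (0:ℝ) < (a:ℝ) + 3 := by positivity
      have h2 : (0:ℝ) < (b:ℝ) + 3 := by positivity
      rw [hθf] at hab
      simp only at hab
      rw [div_eq_div_iff h1.ne' h2.ne'] at hab
      have : (a:ℝ) = b := by nlinarith [Real.pi_pos]
      exact_mod_cast this
    choose A hAmeas hAmu hAeq using fun k => main (θf k)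
    -- pairwise intersections inside Z
    have hinter : ∀ k l, k ≠ l → A k ∩ A l ⊆ Z := by
      intro k l hkl x hx
      obtain ⟨hxk, hxl⟩ := hx
      rw [hAeq k] at hxk
      rw [hAeq l] at hxl
      obtain ⟨ek, hk2⟩ := hxk
      obtain ⟨el, _⟩ := hxl
      set p := ⟪w ⟨0, hm⟩, x⟫ with hp
      set q := ⟪c, x⟫ with hq
      have ek' : Real.cos (θf k) * p + Real.sin (θf k) * q = 0 := by
        rw [hp, hq, ← real_inner_smul_left, ← real_inner_smul_left, ← inner_add_left]
        exact ek
      have el' : Real.cos (θf l) * p + Real.sin (θf l) * q = 0 := by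
        rw [hp, hq, ← real_inner_smul_left, ← real_inner_smul_left, ← inner_add_left]
        exact el
      have hsin : Real.sin (θf k - θf l) ≠ 0 := by
        rcases lt_or_gt_of_ne (fun h => hkl (hθinj h)) with h | h
        · have : 0 < θf l - θf k := by linarith
          have h2 : θf l - θf k < Real.pi := by
            have := (hθmem l).2; have := (hθmem k).1; nlinarith [Real.pi_pos]
          have hpos := Real.sin_pos_of_pos_of_lt_pi this h2
          intro hcon
          rw [show θf k - θf l = -(θf l - θf k) by ring, Real.sin_neg, neg_eq_zero] at hcon
          rw [hcon] at hpos
          exact lt_irrefl 0 hpos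
        · have : 0 < θf k - θf l := by linarith
          have h2 : θf k - θf l < Real.pi := by
            have := (hθmem k).2; have := (hθmem l).1; nlinarith [Real.pi_pos]
          exact ne_of_gt (Real.sin_pos_of_pos_of_lt_pi this h2)
      have hq0 : q = 0 := by
        have : Real.sin (θf k - θf l) * q = 0 := by
          rw [Real.sin_sub]
          linear_combination Real.cos (θf l) * ek' - Real.cos (θf k) * el'
        rcases mul_eq_zero.mp this with h | h
        · exact absurd h hsin
        · exact h
      have hp0 : p = 0 := by
        have hck : Real.cos (θf k) ≠ 0 := by
          apply ne_of_gt
          apply Real.cos_pos_of_mem_Ioo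
          constructor
          · linarith [(hθmem k).1, Real.pi_pos]
          · exact (hθmem k).2
        have : Real.cos (θf k) * p = 0 := by rw [hq0] at ek'; linarith
        rcases mul_eq_zero.mp this with h | h
        · exact absurd h hck
        · exact h
      refine ⟨?_, hq0⟩
      intro i
      by_cases h : 0 < i.val
      · exact hk2 i h
      · have hi0 : i = ⟨0, hm⟩ := by refine Fin.ext ?_; show (i:ℕ) = 0; omega
        rw [hi0]; exact hp0
    -- disjoint family
    set B : ℕ → Set (EuclideanSpace ℝ (Fin d)) := fun k => A k \ Z with hB
    have hBmeas : ∀ k, MeasurableSet (B k) := fun k => (hAmeas k).diff hZmeas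
    have hBdisj : Pairwise (Function.onFun Disjoint B) := by
      intro k l hkl
      rw [Function.onFun, Set.disjoint_left]
      rintro x ⟨hxk, hxz⟩ ⟨hxl, _⟩
      exact hxz (hinter k l hkl ⟨hxk, hxl⟩)
    have hBmu : ∀ k, μ (B k) = μ S := fun k => by
      rw [hB]; simp only []
      rw [measure_diff_null hZ, hAmu]
    by_contra hne0
    have htop : μ (⋃ k, B k) = ⊤ := by
      rw [measure_iUnion hBdisj hBmeas]
      simp_rw [hBmu]
      exact ENNReal.tsum_const_eq_top_of_ne_zero hne0
    have hle : μ (⋃ k, B k) ≤ 1 := by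
      rw [← measure_univ (μ := μ)]
      exact measure_mono (Set.subset_univ _)
    rw [htop] at hle
    exact absurd hle (by simp)

lemma hyperplane_null {μ : Measure (EuclideanSpace ℝ (Fin d))} [IsProbabilityMeasure μ]
    (hd : 2 ≤ d)
    (hsupp : μ {x | ‖x‖ = 1}ᶜ = 0)
    (hrot : ∀ T : EuclideanSpace ℝ (Fin d) ≃ₗᵢ[ℝ] EuclideanSpace ℝ (Fin d), μ.map T = μ)
    (a : EuclideanSpace ℝ (Fin d)) (ha : a ≠ 0) : μ {x | ⟪a, x⟫ = 0} = 0 := by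
  have hnorm : ‖a‖ ≠ 0 := norm_ne_zero_iff.mpr ha
  set w : Fin 1 → EuclideanSpace ℝ (Fin d) := fun _ => ‖a‖⁻¹ • a with hw
  have hworth : Orthonormal ℝ w := by
    rw [orthonormal_iff_ite]
    intro i j
    rw [Subsingleton.elim i j, if_pos rfl, hw]
    rw [real_inner_smul_left, real_inner_smul_right, real_inner_self_eq_norm_sq]
    field_simp
  have := ortho_null hsupp hrot (d - 1) 1 (by omega) le_rfl w hworth
  convert this using 2
  ext x
  simp only [Set.mem_setOf_eq, hw]
  constructor
  · intro h i; rw [real_inner_smul_left, h, mul_zero]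
  · intro h
    have := h 0
    rw [real_inner_smul_left] at this
    rcases mul_eq_zero.mp this with h' | h'
    · exact absurd h' (inv_ne_zero hnorm)
    · exact h'

/-- The disagreement set. -/
def Dset (a b : EuclideanSpace ℝ (Fin d)) : Set (EuclideanSpace ℝ (Fin d)) :=
  {x | sgn ⟪a, x⟫ ≠ sgn ⟪b, x⟫}

lemma Dset_meas (a b : E) : MeasurableSet (Dset a b) := by
  have hP : ∀ w : EuclideanSpace ℝ (Fin d),
      MeasurableSet {x : EuclideanSpace ℝ (Fin d) | 0 < ⟪w, x⟫} := by
    intro w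
    exact measurableSet_lt measurable_const
      ((continuous_const.inner continuous_id).measurable)
  have : Dset a b = ({x | 0 < ⟪a, x⟫} \ {x | 0 < ⟪b, x⟫}) ∪
      ({x | 0 < ⟪b, x⟫} \ {x | 0 < ⟪a, x⟫}) := by
    ext x
    simp only [Dset, Set.mem_setOf_eq, Set.mem_union, Set.mem_diff, Set.mem_setOf_eq,
      sgn_ne_iff]
    tauto
  rw [this]
  exact ((hP a).diff (hP b)).union ((hP b).diff (hP a))

lemma Dset_self (a : E) : Dset a a = ∅ := by
  ext x; simp [Dset]

lemma Dset_neg_eq (a : E) : Dset a (-a) = {x | ⟪a, x⟫ = 0}ᶜ := by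
  ext x
  simp only [Dset, Set.mem_setOf_eq, Set.mem_compl_iff]
  rw [show ⟪-a, x⟫ = -⟪a, x⟫ by rw [inner_neg_left]]
  exact sgn_neg_ne_iff

lemma Dset_neg_measure {μ : Measure (EuclideanSpace ℝ (Fin d))} [IsProbabilityMeasure μ]
    (hd : 2 ≤ d)
    (hsupp : μ {x | ‖x‖ = 1}ᶜ = 0)
    (hrot : ∀ T : EuclideanSpace ℝ (Fin d) ≃ₗᵢ[ℝ] EuclideanSpace ℝ (Fin d), μ.map T = μ)
    (a : EuclideanSpace ℝ (Fin d)) (ha : a ≠ 0) : μ (Dset a (-a)) = 1 := by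
  rw [Dset_neg_eq, prob_compl_eq_one_sub (inner_zero_meas a),
    hyperplane_null hd hsupp hrot a ha, tsub_zero]

lemma pair_onb (hd : 2 ≤ d) (a w : EuclideanSpace ℝ (Fin d))
    (ha : ‖a‖ = 1) (hw : ‖w‖ = 1) (haw : ⟪a, w⟫ = 0) :
    ∃ b : OrthonormalBasis (Fin d) ℝ E,
      b ⟨0, by omega⟩ = a ∧ b ⟨1, by omega⟩ = w := by
  classical
  set v : Fin 2 → EuclideanSpace ℝ (Fin d) := fun i => if i.val = 0 then a else w with hv
  have hwa : ⟪w, a⟫ = 0 := by rw [real_inner_comm]; exact haw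
  have haa : ⟪a, a⟫ = 1 := by
    rw [real_inner_self_eq_norm_sq, ha]; norm_num
  have hww : ⟪w, w⟫ = 1 := by
    rw [real_inner_self_eq_norm_sq, hw]; norm_num
  have hvon : Orthonormal ℝ v := by
    rw [orthonormal_iff_ite]
    intro i j
    fin_cases i <;> fin_cases j <;>
      simp only [hv, Fin.mk.injEq] <;> norm_num <;>
      first
        | exact haa
        | exact hww
        | exact haw
        | exact hwa
        | exact Or.inl ha
        | exact Or.inl hw
  obtain ⟨b, hb⟩ := ext_onb hd v hvon
  refine ⟨b, ?_, ?_⟩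
  · have := hb 0
    exact (by simpa [hv] using this : b (Fin.castLE hd 0) = a)
  · have := hb 1
    exact (by simpa [hv] using this : b (Fin.castLE hd 1) = w)

lemma D_invariant {μ : Measure (EuclideanSpace ℝ (Fin d))} [IsProbabilityMeasure μ]
    (hd : 2 ≤ d)
    (hsupp : μ {x | ‖x‖ = 1}ᶜ = 0)
    (hrot : ∀ T : EuclideanSpace ℝ (Fin d) ≃ₗᵢ[ℝ] EuclideanSpace ℝ (Fin d), μ.map T = μ)
    {a b a' b' : EuclideanSpace ℝ (Fin d)}
    (ha : ‖a‖ = 1) (hb : ‖b‖ = 1) (ha' : ‖a'‖ = 1) (hb' : ‖b'‖ = 1)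
    (hin : ⟪a, b⟫ = ⟪a', b'⟫) : μ (Dset a b) = μ (Dset a' b') := by
  set t : ℝ := ⟪a, b⟫ with ht
  have htabs : |t| ≤ 1 := by
    have := abs_real_inner_le_norm a b
    rwa [ha, hb, mul_one] at this
  rcases eq_or_lt_of_le (abs_le.mp htabs).2 with h1 | h1
  · -- t = 1 : b = a, b' = a'
    have hba : b = a := ((inner_eq_one_iff_of_norm_eq_one ha hb).mp h1).symm
    have hba' : b' = a' := ((inner_eq_one_iff_of_norm_eq_one ha' hb').mp (by rw [← hin]; exact h1)).symm
    rw [hba, hba', Dset_self, Dset_self]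
  rcases eq_or_lt_of_le (abs_le.mp htabs).1 with h2 | h2
  · -- t = -1 : b = -a, b' = -a'
    have key : ∀ p q : EuclideanSpace ℝ (Fin d), ‖p‖ = 1 → ‖q‖ = 1 → ⟪p, q⟫ = -1 → q = -p := by
      intro p q hp hq hpq
      have : ‖p + q‖ ^ 2 = 0 := by
        rw [norm_add_sq_real, hp, hq, hpq]; norm_num
      have hz : p + q = 0 := by
        have := pow_eq_zero_iff (n := 2) (by norm_num) |>.mp this
        exact norm_eq_zero.mp this
      exact eq_neg_of_add_eq_zero_right hz
    have haz : a ≠ 0 := fun h => by simp [h] at ha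
    have haz' : a' ≠ 0 := fun h => by simp [h] at ha'
    have hba : b = -a := key a b ha hb (by rw [← ht, ← h2])
    have hba' : b' = -a' := key a' b' ha' hb' (by rw [← hin, ← h2])
    rw [hba, hba', Dset_neg_measure hd hsupp hrot a haz,
      Dset_neg_measure hd hsupp hrot a' haz']
  · -- |t| < 1
    have hs : (0:ℝ) < Real.sqrt (1 - t^2) := by
      apply Real.sqrt_pos.mpr
      nlinarith [abs_le.mp htabs]
    set s : ℝ := Real.sqrt (1 - t^2) with hsdef
    have hs2 : s ^ 2 = 1 - t ^ 2 := Real.sq_sqrt (by nlinarith [abs_le.mp htabs])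
    have mk : ∀ p q : EuclideanSpace ℝ (Fin d), ‖p‖ = 1 → ‖q‖ = 1 → ⟪p, q⟫ = t →
        ⟪p, s⁻¹ • (q - t • p)⟫ = 0 ∧ ‖s⁻¹ • (q - t • p)‖ = 1 ∧
          q = t • p + s • (s⁻¹ • (q - t • p)) := by
      intro p q hp hq hpq
      have hpp : ⟪p, p⟫ = 1 := by rw [real_inner_self_eq_norm_sq, hp]; norm_num
      have hqq : ⟪q, q⟫ = 1 := by rw [real_inner_self_eq_norm_sq, hq]; norm_num
      have hqp : ⟪q, p⟫ = t := by rw [real_inner_comm]; exact hpq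
      refine ⟨?_, ?_, ?_⟩
      · rw [real_inner_smul_right, inner_sub_right, real_inner_smul_right, hpq, hpp]
        ring
      · have hinner : ⟪s⁻¹ • (q - t • p), s⁻¹ • (q - t • p)⟫ = 1 := by
          rw [real_inner_smul_left, real_inner_smul_right, inner_sub_left, inner_sub_right,
            inner_sub_right, real_inner_smul_left, real_inner_smul_left,
            real_inner_smul_right, real_inner_smul_right, hpp, hqq, hpq, hqp]
          field_simp
          nlinarith [hs2]
        have h2 : ‖s⁻¹ • (q - t • p)‖ ^ 2 = 1 := by
          rw [← real_inner_self_eq_norm_sq]; exact hinner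
        nlinarith [norm_nonneg (s⁻¹ • (q - t • p))]
      · rw [smul_smul, mul_inv_cancel₀ (ne_of_gt hs), one_smul]
        abel
    obtain ⟨how, hnw, hbw⟩ := mk a b ha hb rfl
    obtain ⟨how', hnw', hbw'⟩ := mk a' b' ha' hb' hin.symm
    set w : EuclideanSpace ℝ (Fin d) := s⁻¹ • (b - t • a) with hwdef
    set w' : EuclideanSpace ℝ (Fin d) := s⁻¹ • (b' - t • a') with hwdef'
    obtain ⟨p, hp0, hp1⟩ := pair_onb hd a w ha hnw how
    obtain ⟨p', hp0', hp1'⟩ := pair_onb hd a' w' ha' hnw' how'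
    set T := p.repr.trans p'.repr.symm with hT
    have hTa : T a = a' := by rw [← hp0, ← hp0']; exact basis_map p p' _
    have hTw : T w = w' := by rw [← hp1, ← hp1']; exact basis_map p p' _
    have hTb : T b = b' := by
      rw [hbw, map_add, _root_.map_smul, _root_.map_smul, hTa, hTw, ← hbw']
    have hpre : Dset a b = T ⁻¹' (Dset a' b') := by
      ext x
      simp only [Dset, Set.mem_preimage, Set.mem_setOf_eq]
      rw [← hTa, ← hTb, T.inner_map_map, T.inner_map_map]
    rw [hpre]
    exact map_measure hrot T (Dset_meas a' b')

noncomputable def uvec (hd : 2 ≤ d) (θ : ℝ) : EuclideanSpace ℝ (Fin d) :=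
  Real.cos θ • EuclideanSpace.single (⟨0, by omega⟩ : Fin d) (1:ℝ) +
    Real.sin θ • EuclideanSpace.single (⟨1, by omega⟩ : Fin d) (1:ℝ)

lemma inner_uvec_apply (hd : 2 ≤ d) (θ : ℝ) (x : EuclideanSpace ℝ (Fin d)) :
    ⟪uvec hd θ, x⟫ = Real.cos θ * x ⟨0, by omega⟩ + Real.sin θ * x ⟨1, by omega⟩ := by
  unfold uvec
  rw [inner_add_left, real_inner_smul_left, real_inner_smul_left,
    EuclideanSpace.inner_single_left, EuclideanSpace.inner_single_left]
  simp

lemma inner_uvec (hd : 2 ≤ d) (α β : ℝ) :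
    ⟪uvec hd α, uvec hd β⟫ = Real.cos (β - α) := by
  rw [inner_uvec_apply hd α (uvec hd β)]
  unfold uvec
  have h01 : (⟨0, by omega⟩ : Fin d) ≠ ⟨1, by omega⟩ := by
    simp [Fin.ext_iff]
  simp only [PiLp.add_apply, PiLp.smul_apply, EuclideanSpace.single_apply, smul_eq_mul]
  simp only [Fin.mk.injEq, if_true, ite_true, ite_false]
  norm_num
  rw [Real.cos_sub]
  ring

lemma norm_uvec (hd : 2 ≤ d) (θ : ℝ) : ‖uvec hd θ‖ = 1 := by
  have h := inner_uvec hd θ θ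
  rw [sub_self, Real.cos_zero, real_inner_self_eq_norm_sq] at h
  nlinarith [norm_nonneg (uvec hd θ)]

lemma uvec_ne_zero (hd : 2 ≤ d) (θ : ℝ) : uvec hd θ ≠ 0 := by
  intro h
  have := norm_uvec hd θ
  rw [h] at this
  simp at this

lemma uvec_pi (hd : 2 ≤ d) : uvec hd Real.pi = -uvec hd 0 := by
  unfold uvec
  rw [Real.cos_pi, Real.sin_pi, Real.cos_zero, Real.sin_zero]
  simp

lemma Dset_inter_null {μ : Measure (EuclideanSpace ℝ (Fin d))} [IsProbabilityMeasure μ]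
    (hd : 2 ≤ d)
    (hsupp : μ {x | ‖x‖ = 1}ᶜ = 0)
    (hrot : ∀ T : EuclideanSpace ℝ (Fin d) ≃ₗᵢ[ℝ] EuclideanSpace ℝ (Fin d), μ.map T = μ)
    {α β : ℝ} (hα : 0 ≤ α) (hβ : 0 ≤ β) (hαβ : α + β ≤ Real.pi) :
    μ (Dset (uvec hd 0) (uvec hd α) ∩ Dset (uvec hd α) (uvec hd (α+β))) = 0 := by
  have hπ := Real.pi_pos
  have hsub : Dset (uvec hd 0) (uvec hd α) ∩ Dset (uvec hd α) (uvec hd (α+β)) ⊆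
      {x | ⟪uvec hd 0, x⟫ = 0} ∪
        ({x | ⟪uvec hd α, x⟫ = 0} ∪ {x | ⟪uvec hd (α+β), x⟫ = 0}) := by
    rintro x ⟨h1, h2⟩
    simp only [Dset, Set.mem_setOf_eq] at h1 h2
    by_contra hx
    simp only [Set.mem_union, Set.mem_setOf_eq] at hx
    push_neg at hx
    obtain ⟨hp, hq, hr⟩ := hx
    set p := ⟪uvec hd 0, x⟫ with hpd
    set q := ⟪uvec hd α, x⟫ with hqd
    set r := ⟪uvec hd (α+β), x⟫ with hrd
    have hpq : p * q < 0 := sgn_ne_mul_neg h1 hp hq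
    have hqr : q * r < 0 := sgn_ne_mul_neg h2 hq hr
    -- trig identity
    have hid : Real.sin β * p + Real.sin α * r = Real.sin (α+β) * q := by
      have hpy := Real.sin_sq_add_cos_sq α
      rw [hpd, hqd, hrd, inner_uvec_apply, inner_uvec_apply, inner_uvec_apply,
        Real.sin_add, Real.cos_add, Real.cos_zero, Real.sin_zero]
      linear_combination (-(Real.sin β * x ⟨0, by omega⟩)) * hpy
    have hsa : 0 ≤ Real.sin α := Real.sin_nonneg_of_nonneg_of_le_pi hα (by linarith)
    have hsb : 0 ≤ Real.sin β := Real.sin_nonneg_of_nonneg_of_le_pi hβ (by linarith)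
    have hsab : 0 ≤ Real.sin (α+β) :=
      Real.sin_nonneg_of_nonneg_of_le_pi (by linarith) hαβ
    have hsar : Real.sin α * r = 0 := by
      rcases hq.lt_or_gt with hqneg | hqpos
      · -- q < 0, so p > 0, r > 0
        have hppos : 0 < p := by nlinarith
        have hrpos : 0 < r := by nlinarith
        have t1 : Real.sin (α+β) * q ≤ 0 := mul_nonpos_of_nonneg_of_nonpos hsab hqneg.le
        have t2 : 0 ≤ Real.sin β * p := mul_nonneg hsb hppos.le
        have t3 : 0 ≤ Real.sin α * r := mul_nonneg hsa hrpos.le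
        linarith
      · -- q > 0, so p < 0, r < 0
        have hpneg : p < 0 := by nlinarith
        have hrneg : r < 0 := by nlinarith
        have t1 : 0 ≤ Real.sin (α+β) * q := mul_nonneg hsab hqpos.le
        have t2 : Real.sin β * p ≤ 0 := mul_nonpos_of_nonneg_of_nonpos hsb hpneg.le
        have t3 : Real.sin α * r ≤ 0 := mul_nonpos_of_nonneg_of_nonpos hsa hrneg.le
        linarith
    have hsinα : Real.sin α = 0 := by
      rcases mul_eq_zero.mp hsar with h | h
      · exact h
      · exact absurd h hr
    rcases eq_or_lt_of_le hα with hα0 | hαpos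
    · -- α = 0
      have hqp : q = p := by rw [hqd, hpd, ← hα0]
      rw [hqp] at hpq
      exact absurd hpq (not_lt.mpr (mul_self_nonneg p))
    · rcases lt_or_eq_of_le (show α ≤ Real.pi by linarith) with hαlt | hαpi
      · exact absurd hsinα (ne_of_gt (Real.sin_pos_of_pos_of_lt_pi hαpos hαlt))
      · have hβ0 : β = 0 := by linarith
        have hrq : r = q := by rw [hrd, hqd, hβ0, add_zero]
        rw [hrq] at hqr
        exact absurd hqr (not_lt.mpr (mul_self_nonneg q))
  refine measure_mono_null hsub ?_
  apply measure_union_null (hyperplane_null hd hsupp hrot _ (uvec_ne_zero hd 0))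
  exact measure_union_null (hyperplane_null hd hsupp hrot _ (uvec_ne_zero hd α))
    (hyperplane_null hd hsupp hrot _ (uvec_ne_zero hd (α+β)))

lemma F_add {μ : Measure (EuclideanSpace ℝ (Fin d))} [IsProbabilityMeasure μ]
    (hd : 2 ≤ d)
    (hsupp : μ {x | ‖x‖ = 1}ᶜ = 0)
    (hrot : ∀ T : EuclideanSpace ℝ (Fin d) ≃ₗᵢ[ℝ] EuclideanSpace ℝ (Fin d), μ.map T = μ)
    {α β : ℝ} (hα : 0 ≤ α) (hβ : 0 ≤ β) (hαβ : α + β ≤ Real.pi) :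
    μ (Dset (uvec hd 0) (uvec hd (α+β))) =
      μ (Dset (uvec hd 0) (uvec hd α)) + μ (Dset (uvec hd 0) (uvec hd β)) := by
  set D1 := Dset (uvec hd 0) (uvec hd α) with hD1
  set D2 := Dset (uvec hd α) (uvec hd (α+β)) with hD2
  have hsplit : Dset (uvec hd 0) (uvec hd (α+β)) = (D1 \ D2) ∪ (D2 \ D1) := by
    ext x
    simp only [hD1, hD2, Dset, Set.mem_setOf_eq, Set.mem_union, Set.mem_diff,
      Set.mem_setOf_eq, not_not]
    rcases sgn_cases ⟪uvec hd 0, x⟫ with h1 | h1 <;>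
      rcases sgn_cases ⟪uvec hd α, x⟫ with h2 | h2 <;>
      rcases sgn_cases ⟪uvec hd (α+β), x⟫ with h3 | h3 <;>
      rw [h1, h2, h3] <;> norm_num
  have hnull : μ (D1 ∩ D2) = 0 := Dset_inter_null hd hsupp hrot hα hβ hαβ
  have hd1 : μ (D1 \ D2) = μ D1 := measure_diff_null' hnull
  have hd2 : μ (D2 \ D1) = μ D2 := measure_diff_null' (by rwa [Set.inter_comm])
  have hdisj : Disjoint (D1 \ D2) (D2 \ D1) := by
    rw [Set.disjoint_left]
    rintro x ⟨hx1, hx2⟩ ⟨hx3, _⟩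
    exact hx2 hx3
  have hmeas : MeasurableSet (D2 \ D1) := (Dset_meas _ _).diff (Dset_meas _ _)
  rw [hsplit, measure_union hdisj hmeas, hd1, hd2]
  congr 1
  apply D_invariant hd hsupp hrot (norm_uvec hd α) (norm_uvec hd (α+β))
    (norm_uvec hd 0) (norm_uvec hd β)
  rw [inner_uvec, inner_uvec]
  congr 1
  ring

lemma F_eq {μ : Measure (EuclideanSpace ℝ (Fin d))} [IsProbabilityMeasure μ]
    (hd : 2 ≤ d)
    (hsupp : μ {x | ‖x‖ = 1}ᶜ = 0)
    (hrot : ∀ T : EuclideanSpace ℝ (Fin d) ≃ₗᵢ[ℝ] EuclideanSpace ℝ (Fin d), μ.map T = μ)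
    {θ : ℝ} (hθ0 : 0 ≤ θ) (hθπ : θ ≤ Real.pi) :
    μ (Dset (uvec hd 0) (uvec hd θ)) = ENNReal.ofReal (θ / Real.pi) := by
  have hπ := Real.pi_pos
  set g : ℝ → ℝ := fun t => (μ (Dset (uvec hd 0) (uvec hd t))).toReal with hg
  have hfin : ∀ t : ℝ, μ (Dset (uvec hd 0) (uvec hd t)) ≠ ⊤ := fun t => measure_ne_top μ _
  have hgadd : ∀ a b : ℝ, 0 ≤ a → 0 ≤ b → a + b ≤ Real.pi → g (a+b) = g a + g b := by
    intro a b ha hb hab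
    rw [hg]
    simp only []
    rw [F_add hd hsupp hrot ha hb hab, ENNReal.toReal_add (hfin a) (hfin b)]
  have hgnonneg : ∀ t, 0 ≤ g t := fun t => ENNReal.toReal_nonneg
  have hg0 : g 0 = 0 := by
    rw [hg]; simp only []
    rw [Dset_self]; simp
  have hgπ : g Real.pi = 1 := by
    rw [hg]; simp only []
    rw [uvec_pi hd, Dset_neg_measure hd hsupp hrot _ (uvec_ne_zero hd 0)]
    simp
  have hgmono : ∀ a b : ℝ, 0 ≤ a → a ≤ b → b ≤ Real.pi → g a ≤ g b := by
    intro a b ha hab hb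
    have := hgadd a (b - a) ha (by linarith) (by linarith)
    rw [show a + (b - a) = b by ring] at this
    linarith [hgnonneg (b - a)]
  have hgmul : ∀ (k : ℕ) (s : ℝ), 0 ≤ s → (k : ℝ) * s ≤ Real.pi → g ((k:ℝ) * s) = k * g s := by
    intro k
    induction k with
    | zero => intro s hs _; simp [hg0]
    | succ k ih =>
      intro s hs hks
      have hks' : (k : ℝ) * s ≤ Real.pi := by
        push_cast at hks ⊢
        nlinarith
      have := hgadd ((k:ℝ) * s) s (by positivity) hs (by push_cast at hks ⊢; nlinarith)
      push_cast
      rw [show ((k:ℝ) + 1) * s = (k:ℝ) * s + s by ring, this, ih s hs hks']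
      ring
  have hgdiv : ∀ n : ℕ, 0 < n → g (Real.pi / n) = 1 / n := by
    intro n hn
    have hn' : (0:ℝ) < n := by exact_mod_cast hn
    have h1 := hgmul n (Real.pi / n) (by positivity)
      (by rw [mul_div_cancel₀ _ (ne_of_gt hn')])
    rw [mul_div_cancel₀ _ (ne_of_gt hn'), hgπ] at h1
    field_simp
    linarith
  have hfrac : ∀ n k : ℕ, 0 < n → k ≤ n → g ((k:ℝ) * (Real.pi / n)) = k / n := by
    intro n k hn hkn
    have hn' : (0:ℝ) < n := by exact_mod_cast hn
    have hkn' : (k:ℝ) ≤ n := by exact_mod_cast hkn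
    have hb : (k:ℝ) * (Real.pi / n) ≤ Real.pi := by
      have h2 : (k:ℝ) * (Real.pi / n) ≤ (n:ℝ) * (Real.pi / n) :=
        mul_le_mul_of_nonneg_right hkn' (by positivity)
      rwa [mul_div_cancel₀ _ (ne_of_gt hn')] at h2
    rw [hgmul k (Real.pi / n) (by positivity) hb, hgdiv n hn]
    ring
  have hlow : ∀ t : ℝ, 0 ≤ t → t ≤ Real.pi → t / Real.pi ≤ g t := by
    intro t ht0 htπ
    by_contra hcon
    push_neg at hcon
    obtain ⟨n, hn⟩ := exists_nat_one_div_lt (show 0 < t / Real.pi - g t by linarith)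
    set m : ℕ := n + 1 with hm
    have hm0 : (0:ℝ) < m := by positivity
    have hmcast : (m:ℝ) = (n:ℝ) + 1 := by rw [hm]; push_cast; ring
    set k : ℕ := Nat.floor (t * m / Real.pi) with hk
    have hk1 : (k:ℝ) ≤ t * m / Real.pi := Nat.floor_le (by positivity)
    have hk2 : t * m / Real.pi < k + 1 := Nat.lt_floor_add_one _
    have hkm : k ≤ m := by
      have h2 : t * m / Real.pi ≤ m := by
        rw [div_le_iff₀ hπ]
        nlinarith
      have h3 : (k:ℝ) ≤ m := le_trans hk1 h2
      exact_mod_cast h3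
    have hkθ : (k:ℝ) * (Real.pi / m) ≤ t := by
      rw [← mul_div_assoc, div_le_iff₀ hm0]
      exact (le_div_iff₀ hπ).mp hk1
    have hgk : (k:ℝ)/m ≤ g t := by
      rw [← hfrac m k (by omega) hkm]
      exact hgmono _ _ (by positivity) hkθ htπ
    have h3 : ((k:ℝ)+1)/m < t/Real.pi := by
      rw [add_div]
      have h4 : (1:ℝ)/m < t/Real.pi - g t := by rw [hmcast]; exact hn
      linarith
    rw [div_lt_div_iff₀ hm0 hπ] at h3
    have h4 : t * m < ((k:ℝ)+1) * Real.pi := by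
      rw [div_lt_iff₀ hπ] at hk2
      linarith
    linarith
  have hup : g θ ≤ θ / Real.pi := by
    have h1 := hgadd θ (Real.pi - θ) hθ0 (by linarith) (by linarith)
    rw [show θ + (Real.pi - θ) = Real.pi by ring, hgπ] at h1
    have h2 := hlow (Real.pi - θ) (by linarith) (by linarith)
    have h3 : (Real.pi - θ)/Real.pi = 1 - θ/Real.pi := by field_simp
    linarith
  have hfinal : g θ = θ / Real.pi := le_antisymm hup (hlow θ hθ0 hθπ)
  rw [← ENNReal.ofReal_toReal (hfin θ)]
  congr 1


lemma sgn_pos_mul (c t : ℝ) (hc : 0 < c) : sgn (c * t) = sgn t := by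
  unfold sgn
  by_cases h : 0 < t
  · rw [if_pos h, if_pos (mul_pos hc h)]
  · rw [if_neg h, if_neg (fun hct => h (by nlinarith))]

end Helpers

/-- **The disagreement probability of two halfspaces under the uniform distribution on the
unit sphere equals their angle over `π`.**

Let `d ≥ 2`, let `u, v ∈ ℝ^d` be nonzero with angle `φ = arccos(u·v/(‖u‖‖v‖)) ∈ [0, π]`, and
let `μ` be the uniform distribution on the unit sphere in `ℝ^d` (the rotation-invariant
probability measure supported on `{x : ‖x‖ = 1}`).  Then
`Pr_{x∼μ}[sign(u·x) ≠ sign(v·x)] = φ/π`. -/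
theorem disagreement_probability_eq_angle_div_pi
    (d : ℕ) (hd : 2 ≤ d)
    (μ : Measure (EuclideanSpace ℝ (Fin d))) [IsProbabilityMeasure μ]
    (hsupp : μ {x | ‖x‖ = 1}ᶜ = 0)
    (hrot : ∀ T : EuclideanSpace ℝ (Fin d) ≃ₗᵢ[ℝ] EuclideanSpace ℝ (Fin d),
      μ.map T = μ)
    (u v : EuclideanSpace ℝ (Fin d)) (hu : u ≠ 0) (hv : v ≠ 0) :
    μ {x | sgn ⟪u, x⟫ ≠ sgn ⟪v, x⟫}
      = ENNReal.ofReal (Real.arccos (⟪u, v⟫ / (‖u‖ * ‖v‖)) / Real.pi) := by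
  have hπ := Real.pi_pos
  have hupos : 0 < ‖u‖ := norm_pos_iff.mpr hu
  have hvpos : 0 < ‖v‖ := norm_pos_iff.mpr hv
  set a := ‖u‖⁻¹ • u with hadef
  set b := ‖v‖⁻¹ • v with hbdef
  have ha : ‖a‖ = 1 := by
    rw [hadef, norm_smul, Real.norm_eq_abs, abs_of_pos (inv_pos.mpr hupos)]
    field_simp
  have hb : ‖b‖ = 1 := by
    rw [hbdef, norm_smul, Real.norm_eq_abs, abs_of_pos (inv_pos.mpr hvpos)]
    field_simp
  have hset : {x | sgn ⟪u, x⟫ ≠ sgn ⟪v, x⟫} = Dset a b := by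
    ext x
    simp only [Dset, Set.mem_setOf_eq, hadef, hbdef]
    rw [real_inner_smul_left, real_inner_smul_left,
      sgn_pos_mul _ _ (inv_pos.mpr hupos), sgn_pos_mul _ _ (inv_pos.mpr hvpos)]
  have hab : ⟪a, b⟫ = ⟪u, v⟫ / (‖u‖ * ‖v‖) := by
    rw [hadef, hbdef, real_inner_smul_left, real_inner_smul_right]
    field_simp
  have htabs : |⟪a, b⟫| ≤ 1 := by
    have := abs_real_inner_le_norm a b
    rwa [ha, hb, mul_one] at this
  set φ := Real.arccos (⟪u, v⟫ / (‖u‖ * ‖v‖)) with hφ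
  have hφ0 : 0 ≤ φ := Real.arccos_nonneg _
  have hφπ : φ ≤ Real.pi := Real.arccos_le_pi _
  have hcos : Real.cos φ = ⟪a, b⟫ := by
    rw [hφ, ← hab]
    exact Real.cos_arccos (abs_le.mp htabs).1 (abs_le.mp htabs).2
  have hin : ⟪a, b⟫ = ⟪uvec hd 0, uvec hd φ⟫ := by
    rw [inner_uvec, sub_zero, hcos]
  rw [hset,
    D_invariant hd hsupp hrot ha hb (norm_uvec hd 0) (norm_uvec hd φ) hin,
    F_eq hd hsupp hrot hφ0 hφπ]
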